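/- Let R = ∂B be a nondegenerate convex reflector with support function h and radial function ρ. For every u ∈ Sⁿ, the contact set C_u = R ∩ {Z ∈ ℝ^{n+1} : ⟨Z,u⟩ = h(u)} consists of exactly one point; that is, there exists a unique x ∈ Sⁿ such that C_u = {ρ(x)x}. -/
import Mathlib


open scoped InnerProductSpace ENNReal
open Metric Set

noncomputable section

/-- Euclidean space `ℝ^{n+1}`. -/
abbrev E (n : ℕ) : Type := EuclideanSpace ℝ (Fin (n + 1))

/-- The unit sphere `Sⁿ` centered at the origin in `ℝ^{n+1}`. -/
def sph (n : ℕ) : Set (E n) := Metric.sphere (0 : E n) 1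

/-- `B` is the convex body of a nondegenerate convex reflector: `B` is the intersection of the
solid confocal paraboloids `{X : ‖X‖ - ⟪X,y⟫ ≤ p̃ y}` for some `p̃ : Sⁿ → (0,∞]`
(encoded via `ENNReal`), `B` is compact and the origin is an interior point of `B`.
The reflector itself is `R = frontier B`. -/
def IsReflectorBody (n : ℕ) (B : Set (E n)) : Prop :=
  IsCompact B ∧ (0 : E n) ∈ interior B ∧
    ∃ pt : E n → ℝ≥0∞, (∀ y ∈ sph n, 0 < pt y) ∧
      B = {X : E n | ∀ y ∈ sph n, ENNReal.ofReal (‖X‖ - ⟪X, y⟫_ℝ) ≤ pt y}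

/-- The focal function `p(y) = sup_{X ∈ B} (‖X‖ - ⟪X, y⟫)` of the reflector `∂B`. -/
def focal (n : ℕ) (B : Set (E n)) (y : E n) : ℝ :=
  sSup ((fun X => ‖X‖ - ⟪X, y⟫_ℝ) '' B)

/-- The radial function `ρ(x) = sup {λ ≥ 0 : λ x ∈ B}`. -/
def radial (n : ℕ) (B : Set (E n)) (x : E n) : ℝ :=
  sSup {l : ℝ | 0 ≤ l ∧ l • x ∈ B}

/-- The support function `h(U) = sup_{X ∈ B} ⟪X, U⟫`. -/
def suppFn (n : ℕ) (B : Set (E n)) (U : E n) : ℝ :=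
  sSup ((fun X => ⟪X, U⟫_ℝ) '' B)

/-- The extended focal function `P(Y) = sup_{X ∈ B} (‖X‖‖Y‖ - ⟪X, Y⟫)` on all of `ℝ^{n+1}`. -/
def extFocal (n : ℕ) (B : Set (E n)) (Y : E n) : ℝ :=
  sSup ((fun X => ‖X‖ * ‖Y‖ - ⟪X, Y⟫_ℝ) '' B)

/-- The directrix `D(R) = {X - ‖X‖y : X ∈ R, y ∈ Sⁿ, ‖X‖ - ⟪X,y⟫ = p(y)}` of the
reflector `R = frontier B`. -/
def directrix (n : ℕ) (B : Set (E n)) : Set (E n) :=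
  {Z : E n | ∃ X ∈ frontier B, ∃ y ∈ sph n,
    ‖X‖ - ⟪X, y⟫_ℝ = focal n B y ∧ Z = X - ‖X‖ • y}

/-- Membership in the sphere means the norm is one. -/
lemma mem_sph_norm {n : ℕ} {y : E n} (hy : y ∈ sph n) : ‖y‖ = 1 := by
  simpa [sph] using hy

/-- If a point has paraboloid values bounded by the max of the paraboloid values of two
points of `B`, then it lies in `B`. -/
lemma mem_of_le_max {n : ℕ} {pt : E n → ℝ≥0∞} {X Y Z : E n}
    (hX : ∀ y ∈ sph n, ENNReal.ofReal (‖X‖ - ⟪X, y⟫_ℝ) ≤ pt y)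
    (hY : ∀ y ∈ sph n, ENNReal.ofReal (‖Y‖ - ⟪Y, y⟫_ℝ) ≤ pt y)
    (hZ : ∀ y ∈ sph n, ‖Z‖ - ⟪Z, y⟫_ℝ ≤ max (‖X‖ - ⟪X, y⟫_ℝ) (‖Y‖ - ⟪Y, y⟫_ℝ)) :
    ∀ y ∈ sph n, ENNReal.ofReal (‖Z‖ - ⟪Z, y⟫_ℝ) ≤ pt y := by
  intro y hy
  rcases le_total (‖X‖ - ⟪X, y⟫_ℝ) (‖Y‖ - ⟪Y, y⟫_ℝ) with h | h
  · exact le_trans (ENNReal.ofReal_le_ofReal ((hZ y hy).trans (max_le h le_rfl))) (hY y hy)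
  · exact le_trans (ENNReal.ofReal_le_ofReal ((hZ y hy).trans (max_le le_rfl h))) (hX y hy)

/-- Convexity of the paraboloid value function. -/
lemma paraboloid_ineq {n : ℕ} {X Y y : E n} (hy : ‖y‖ = 1) {a b : ℝ}
    (ha : 0 ≤ a) (hb : 0 ≤ b) :
    ‖a • X + b • Y‖ - ⟪a • X + b • Y, y⟫_ℝ ≤
      a * (‖X‖ - ⟪X, y⟫_ℝ) + b * (‖Y‖ - ⟪Y, y⟫_ℝ) := by
  have h1 : ‖a • X + b • Y‖ ≤ a * ‖X‖ + b * ‖Y‖ := by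
    calc ‖a • X + b • Y‖ ≤ ‖a • X‖ + ‖b • Y‖ := norm_add_le _ _
    _ = a * ‖X‖ + b * ‖Y‖ := by
        rw [norm_smul, norm_smul, Real.norm_eq_abs, Real.norm_eq_abs,
          abs_of_nonneg ha, abs_of_nonneg hb]
  have h2 : ⟪a • X + b • Y, y⟫_ℝ = a * ⟪X, y⟫_ℝ + b * ⟪Y, y⟫_ℝ := by
    rw [inner_add_left, real_inner_smul_left, real_inner_smul_left]
  rw [h2]; ring_nf; ring_nf at h1; linarith

/-- A reflector body is convex. -/
lemma reflector_convex {n : ℕ} (pt : E n → ℝ≥0∞) :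
    Convex ℝ {X : E n | ∀ y ∈ sph n, ENNReal.ofReal (‖X‖ - ⟪X, y⟫_ℝ) ≤ pt y} := by
  intro X hX Y hY a b ha hb hab
  refine mem_of_le_max hX hY (fun y hy => ?_)
  have h1 := paraboloid_ineq (X := X) (Y := Y) (mem_sph_norm hy) ha hb
  have h2 : a * (‖X‖ - ⟪X, y⟫_ℝ) + b * (‖Y‖ - ⟪Y, y⟫_ℝ) ≤
      max (‖X‖ - ⟪X, y⟫_ℝ) (‖Y‖ - ⟪Y, y⟫_ℝ) := by
    have l1 : ‖X‖ - ⟪X, y⟫_ℝ ≤ max (‖X‖ - ⟪X, y⟫_ℝ) (‖Y‖ - ⟪Y, y⟫_ℝ) := le_max_left _ _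
    have l2 : ‖Y‖ - ⟪Y, y⟫_ℝ ≤ max (‖X‖ - ⟪X, y⟫_ℝ) (‖Y‖ - ⟪Y, y⟫_ℝ) := le_max_right _ _
    calc a * (‖X‖ - ⟪X, y⟫_ℝ) + b * (‖Y‖ - ⟪Y, y⟫_ℝ)
        ≤ a * max (‖X‖ - ⟪X, y⟫_ℝ) (‖Y‖ - ⟪Y, y⟫_ℝ) +
            b * max (‖X‖ - ⟪X, y⟫_ℝ) (‖Y‖ - ⟪Y, y⟫_ℝ) :=
          add_le_add (mul_le_mul_of_nonneg_left l1 ha) (mul_le_mul_of_nonneg_left l2 hb)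
      _ = max (‖X‖ - ⟪X, y⟫_ℝ) (‖Y‖ - ⟪Y, y⟫_ℝ) := by rw [← add_mul, hab, one_mul]
  exact h1.trans h2

/-- For every `u ∈ Sⁿ`, the contact set `C_u = R ∩ {Z : ⟪Z,u⟫ = h(u)}`
consists of exactly one point; there is a unique `x ∈ Sⁿ` with `C_u = {ρ(x) x}`. -/
theorem statement4 (n : ℕ) (hn : 1 ≤ n) (B R : Set (E n))
    (hB : IsReflectorBody n B) (hR : R = frontier B)
    (u : E n) (hu : u ∈ sph n) :
    ∃! x : E n, x ∈ sph n ∧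
      R ∩ {Z : E n | ⟪Z, u⟫_ℝ = suppFn n B u} = {radial n B x • x} := by
  obtain ⟨hcpt, h0int, pt, hptpos, hBeq⟩ := hB
  have hconv : Convex ℝ B := hBeq ▸ reflector_convex pt
  have hclosed : IsClosed B := hcpt.isClosed
  have h0B : (0 : E n) ∈ B := interior_subset h0int
  have huN : ‖u‖ = 1 := mem_sph_norm hu
  have hcont : Continuous fun X : E n => ⟪X, u⟫_ℝ := continuous_id.inner continuous_const
  have hKcpt : IsCompact ((fun X : E n => ⟪X, u⟫_ℝ) '' B) := hcpt.image hcont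
  have hKne : ((fun X : E n => ⟪X, u⟫_ℝ) '' B).Nonempty := ⟨_, ⟨0, h0B, rfl⟩⟩
  obtain ⟨X₀, hX₀B, hX₀h⟩ := hKcpt.sSup_mem hKne
  have hX₀h : ⟪X₀, u⟫_ℝ = suppFn n B u := hX₀h
  have hbdd : BddAbove ((fun X : E n => ⟪X, u⟫_ℝ) '' B) := hKcpt.bddAbove
  have hle : ∀ W ∈ B, ⟪W, u⟫_ℝ ≤ suppFn n B u := fun W hW => le_csSup hbdd ⟨W, hW, rfl⟩
  have huu : ⟪u, u⟫_ℝ = 1 := by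
    rw [real_inner_self_eq_norm_mul_norm, huN, one_mul]
  -- every interior point has strictly smaller inner product
  have hintlt : ∀ W ∈ interior B, ⟪W, u⟫_ℝ < suppFn n B u := by
    intro W hW
    obtain ⟨ε, hε, hball⟩ := Metric.isOpen_iff.1 isOpen_interior W hW
    have hmem : W + (ε / 2) • u ∈ B := by
      refine interior_subset (hball ?_)
      rw [Metric.mem_ball, dist_eq_norm, add_sub_cancel_left, norm_smul, Real.norm_eq_abs,
        abs_of_pos (by positivity), huN, mul_one]
      linarith
    have h1 := hle _ hmem
    rw [inner_add_left, real_inner_smul_left, huu, mul_one] at h1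
    linarith
  have hpos : 0 < suppFn n B u := by
    have := hintlt 0 h0int
    simpa using this
  have hX₀ni : X₀ ∉ interior B := fun hi => absurd hX₀h (ne_of_lt (hintlt _ hi))
  have hX₀fr : X₀ ∈ frontier B := ⟨subset_closure hX₀B, hX₀ni⟩
  have hX₀ne : X₀ ≠ 0 := by
    intro e
    rw [e, inner_zero_left] at hX₀h
    exact absurd hX₀h.symm (ne_of_gt hpos)
  have hnorm₀ : 0 < ‖X₀‖ := norm_pos_iff.2 hX₀ne
  -- the contact set is exactly {X₀}
  have hcontact : frontier B ∩ {Z : E n | ⟪Z, u⟫_ℝ = suppFn n B u} = {X₀} := by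
    apply Subset.antisymm
    · rintro Z ⟨hZfr, hZh⟩
      have hZh : ⟪Z, u⟫_ℝ = suppFn n B u := hZh
      have hZB : Z ∈ B := hclosed.frontier_subset hZfr
      have hZne : Z ≠ 0 := by
        intro e
        rw [e, inner_zero_left] at hZh
        exact absurd hZh.symm (ne_of_gt hpos)
      by_cases hray : ‖Z + X₀‖ = ‖Z‖ + ‖X₀‖
      · -- same ray case: equal points
        have hsr : SameRay ℝ Z X₀ := sameRay_iff_norm_add.2 hray
        obtain ⟨r₁, r₂, hr₁, hr₂, hre⟩ := hsr.exists_pos hZne hX₀ne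
        have he : r₁ * suppFn n B u = r₂ * suppFn n B u := by
          have h1 : ⟪r₁ • Z, u⟫_ℝ = ⟪r₂ • X₀, u⟫_ℝ := by rw [hre]
          rwa [real_inner_smul_left, real_inner_smul_left, hZh, hX₀h] at h1
        have hr : r₁ = r₂ := mul_right_cancel₀ (ne_of_gt hpos) he
        subst hr
        have : Z = X₀ := smul_right_injective (E n) (ne_of_gt hr₁) hre
        simp [this]
      · -- strict triangle inequality: midpoint is interior, contradiction
        exfalso
        have hlt : ‖Z + X₀‖ < ‖Z‖ + ‖X₀‖ := lt_of_le_of_ne (norm_add_le _ _) hray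
        set M := (2 : ℝ)⁻¹ • (Z + X₀) with hM
        have hMnorm : ‖M‖ = ‖Z + X₀‖ / 2 := by
          rw [hM, norm_smul, Real.norm_eq_abs,
            abs_of_pos (by norm_num : (0:ℝ) < 2⁻¹)]
          ring
        set g := (‖Z‖ + ‖X₀‖) / 2 - ‖M‖ with hg
        have hgpos : 0 < g := by rw [hg, hMnorm]; linarith
        have hMint : M ∈ interior B := by
          rw [mem_interior]
          refine ⟨Metric.ball M (g / 2), ?_, Metric.isOpen_ball,
            Metric.mem_ball_self (by positivity)⟩
          intro Z' hZ'
          rw [hBeq]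
          have hZB' : ∀ y ∈ sph n, ENNReal.ofReal (‖Z‖ - ⟪Z, y⟫_ℝ) ≤ pt y := by
            rw [hBeq] at hZB; exact hZB
          have hX₀B' : ∀ y ∈ sph n, ENNReal.ofReal (‖X₀‖ - ⟪X₀, y⟫_ℝ) ≤ pt y := by
            rw [hBeq] at hX₀B; exact hX₀B
          refine mem_of_le_max hZB' hX₀B' (fun y hy => ?_)
          have hyN : ‖y‖ = 1 := mem_sph_norm hy
          have hd : ‖Z' - M‖ < g / 2 := by
            rw [← dist_eq_norm]; exact hZ'
          have e1 : ‖Z'‖ ≤ ‖M‖ + ‖Z' - M‖ := by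
            have h := norm_add_le M (Z' - M)
            simpa using h
          have e2 : |⟪Z' - M, y⟫_ℝ| ≤ ‖Z' - M‖ := by
            have h := abs_real_inner_le_norm (Z' - M) y
            rwa [hyN, mul_one] at h
          have e3 : ⟪Z', y⟫_ℝ = ⟪M, y⟫_ℝ + ⟪Z' - M, y⟫_ℝ := by
            rw [← inner_add_left]
            congr 1
            abel
          have e4 : ⟪M, y⟫_ℝ = (⟪Z, y⟫_ℝ + ⟪X₀, y⟫_ℝ) / 2 := by
            rw [hM, real_inner_smul_left, inner_add_left]; ring
          have e5 := abs_le.1 e2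
          have hmx1 : ‖Z‖ - ⟪Z, y⟫_ℝ ≤ max (‖Z‖ - ⟪Z, y⟫_ℝ) (‖X₀‖ - ⟪X₀, y⟫_ℝ) :=
            le_max_left _ _
          have hmx2 : ‖X₀‖ - ⟪X₀, y⟫_ℝ ≤ max (‖Z‖ - ⟪Z, y⟫_ℝ) (‖X₀‖ - ⟪X₀, y⟫_ℝ) :=
            le_max_right _ _
          have hgdef : ‖M‖ + g = (‖Z‖ + ‖X₀‖) / 2 := by rw [hg]; ring
          linarith [e1, e3, e4, e5.1, e5.2, hd, hgdef]
        have hlt' := hintlt _ hMint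
        have heq : ⟪M, u⟫_ℝ = suppFn n B u := by
          rw [hM, real_inner_smul_left, inner_add_left, hZh, hX₀h]; ring
        linarith
    · intro Z hZ
      rw [mem_singleton_iff] at hZ
      subst hZ
      exact ⟨hX₀fr, hX₀h⟩
  -- the direction of X₀
  set x := ‖X₀‖⁻¹ • X₀ with hx
  have hxsph : x ∈ sph n := by
    have : ‖x‖ = 1 := by
      rw [hx, norm_smul, Real.norm_eq_abs, abs_of_pos (inv_pos.2 hnorm₀),
        inv_mul_cancel₀ (ne_of_gt hnorm₀)]
    simpa [sph] using this
  have hxX₀ : ‖X₀‖ • x = X₀ := by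
    rw [hx, smul_smul, mul_inv_cancel₀ (ne_of_gt hnorm₀), one_smul]
  -- radial sets are bounded above
  obtain ⟨Rb, hRb⟩ := hcpt.isBounded.subset_closedBall 0
  have hSbdd : ∀ x' ∈ sph n, BddAbove {l : ℝ | 0 ≤ l ∧ l • x' ∈ B} := by
    intro x' hx'
    refine ⟨Rb, fun l hl => ?_⟩
    obtain ⟨hl0, hlB⟩ := hl
    have h := hRb hlB
    rw [mem_closedBall_zero_iff, norm_smul, Real.norm_eq_abs, abs_of_nonneg hl0,
      mem_sph_norm hx', mul_one] at h
    exact h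
  -- radial n B x = ‖X₀‖
  have hrad : radial n B x = ‖X₀‖ := by
    apply le_antisymm
    · have hSne : {l : ℝ | 0 ≤ l ∧ l • x ∈ B}.Nonempty :=
        ⟨‖X₀‖, norm_nonneg _, by rw [hxX₀]; exact hX₀B⟩
      apply csSup_le hSne
      rintro l ⟨hl0, hlB⟩
      by_contra hgt
      push_neg at hgt
      have hl0' : 0 < l := lt_of_le_of_lt (norm_nonneg _) hgt
      have hb1 : ‖X₀‖ / l < 1 := (div_lt_one hl0').2 hgt
      have ha : (0 : ℝ) < 1 - ‖X₀‖ / l := by linarith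
      have hb : (0 : ℝ) ≤ ‖X₀‖ / l := by positivity
      have hcombo := hconv.combo_interior_closure_mem_interior h0int
        (subset_closure hlB) ha hb (by ring)
      have : X₀ ∈ interior B := by
        have he : (1 - ‖X₀‖ / l) • (0 : E n) + (‖X₀‖ / l) • (l • x) = X₀ := by
          rw [smul_zero, zero_add, smul_smul, div_mul_cancel₀ _ (ne_of_gt hl0'), hxX₀]
        rwa [he] at hcombo
      exact hX₀ni this
    · exact le_csSup (hSbdd x hxsph) ⟨norm_nonneg _, by rw [hxX₀]; exact hX₀B⟩
  refine ⟨x, ⟨hxsph, ?_⟩, ?_⟩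
  · rw [hR, hrad, hxX₀, hcontact]
  · rintro x' ⟨hx'sph, hx'eq⟩
    rw [hR, hcontact] at hx'eq
    have hxe : radial n B x' • x' = X₀ := (singleton_eq_singleton_iff.1 hx'eq.symm)
    have hr0 : 0 ≤ radial n B x' := by
      apply le_csSup (hSbdd x' hx'sph)
      exact ⟨le_refl 0, by simpa using h0B⟩
    have hnx' : ‖x'‖ = 1 := mem_sph_norm hx'sph
    have hrn : radial n B x' = ‖X₀‖ := by
      have h := congrArg norm hxe
      rwa [norm_smul, hnx', mul_one, Real.norm_eq_abs, abs_of_nonneg hr0] at h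
    rw [hrn] at hxe
    calc x' = ‖X₀‖⁻¹ • (‖X₀‖ • x') := by
            rw [smul_smul, inv_mul_cancel₀ (ne_of_gt hnorm₀), one_smul]
      _ = ‖X₀‖⁻¹ • X₀ := by rw [hxe]
      _ = x := hx.symm

end
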